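/- There exist a constant c > 0 and a threshold n₀ such that for every integer n ≥ n₀ there exists a mesh M with n vertices for which the number of distinct convex polygons that respect M is at least c · 1.5028^n. -/

import Mathlib

open scoped RealInnerProductSpace
open EuclideanGeometry

noncomputable section

/-- The Euclidean plane. -/
abbrev Pt : Type := EuclideanSpace ℝ (Fin 2)

/-- A (possibly degenerate) triangle, given by its three corners. -/
structure Tri where
  a : Pt
  b : Pt
  c : Pt

/-- The vertex set of a triangle. -/
def Tri.verts (T : Tri) : Set Pt := {T.a, T.b, T.c}

/-- The closed triangle (as a region of the plane). -/
def Tri.carrier (T : Tri) : Set Pt := convexHull ℝ T.verts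

/-- The three edges of a triangle, each as a closed segment. -/
def Tri.edgeSegs (T : Tri) : Set (Set Pt) :=
  {segment ℝ T.a T.b, segment ℝ T.b T.c, segment ℝ T.a T.c}

/-- Nondegeneracy: the three corners are not collinear. -/
def Tri.Nondeg (T : Tri) : Prop := ¬ Collinear ℝ T.verts

/-- A mesh: a finite nonempty set of nondegenerate triangles in the plane such that any two
distinct triangles have disjoint interiors and intersect in either the empty set, a common
vertex, or a complete common edge. -/
structure Mesh where
  tris : Set Tri
  finite : tris.Finite
  nonempty : tris.Nonempty
  nondeg : ∀ T ∈ tris, T.Nondeg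
  proper : ∀ T ∈ tris, ∀ T' ∈ tris, T ≠ T' →
    interior T.carrier ∩ interior T'.carrier = ∅ ∧
    (T.carrier ∩ T'.carrier = ∅ ∨
      (∃ v ∈ T.verts ∩ T'.verts, T.carrier ∩ T'.carrier = {v}) ∨
      (∃ e ∈ T.edgeSegs ∩ T'.edgeSegs, T.carrier ∩ T'.carrier = e))

/-- The vertices of a mesh. -/
def Mesh.verts (M : Mesh) : Set Pt := ⋃ T ∈ M.tris, T.verts

/-- The edges of a mesh, as unordered pairs of vertices. -/
def Mesh.edges (M : Mesh) : Set (Sym2 Pt) :=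
  ⋃ T ∈ M.tris, ({s(T.a, T.b), s(T.b, T.c), s(T.a, T.c)} : Set (Sym2 Pt))

/-- A triangle is `δ`-fat if each of its interior angles is at least `δ`. -/
def Tri.Fat (δ : ℝ) (T : Tri) : Prop :=
  δ ≤ ∠ T.b T.a T.c ∧ δ ≤ ∠ T.a T.b T.c ∧ δ ≤ ∠ T.a T.c T.b

/-- A mesh is `δ`-fat if every angle of every triangle is at least `δ`. -/
def Mesh.Fat (δ : ℝ) (M : Mesh) : Prop := ∀ T ∈ M.tris, T.Fat δ

/-- A convex polygon respecting the mesh `M` (a "potato"): the union of a nonempty subset of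
the triangles of `M` which is a convex set. -/
def Mesh.IsPotato (M : Mesh) (P : Set Pt) : Prop :=
  ∃ S, S ⊆ M.tris ∧ S.Nonempty ∧ P = ⋃ T ∈ S, T.carrier ∧ Convex ℝ P

/-- A convex outerplanar polygon respecting the mesh `M` (a "carrot"): a potato that contains
no vertex of `M` in its interior. -/
def Mesh.IsCarrot (M : Mesh) (P : Set Pt) : Prop :=
  M.IsPotato P ∧ ∀ v ∈ M.verts, v ∉ interior P


/-- Parabola point. -/
def pp (t : ℝ) : Pt := WithLp.toLp 2 ![t, t^2]

@[simp] lemma pp_zero (t : ℝ) : pp t 0 = t := rfl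
@[simp] lemma pp_one (t : ℝ) : pp t 1 = t ^ 2 := rfl

lemma pp_inj : Function.Injective pp := by
  intro s t h
  have := congrArg (fun z : Pt => z 0) h
  simpa using this

/-- Linear functional on the plane. -/
def Lf (c₁ c₂ : ℝ) : Pt → ℝ := fun z => c₁ * z 0 + c₂ * z 1

lemma Lf_lin (c₁ c₂ : ℝ) : IsLinearMap ℝ (Lf c₁ c₂) := by
  constructor
  · intro u v; show c₁ * (u 0 + v 0) + c₂ * (u 1 + v 1) = _; unfold Lf; ring
  · intro a u; show c₁ * (a * u 0) + c₂ * (a * u 1) = _; unfold Lf; simp; ring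

@[simp] lemma Lf_pp (c₁ c₂ t : ℝ) : Lf c₁ c₂ (pp t) = c₁ * t + c₂ * t ^ 2 := rfl

lemma Lf_combo (c₁ c₂ a b : ℝ) (u v : Pt) :
    Lf c₁ c₂ (a • u + b • v) = a * Lf c₁ c₂ u + b * Lf c₁ c₂ v := by
  show c₁ * (a * u 0 + b * v 0) + c₂ * (a * u 1 + b * v 1) = _
  unfold Lf; ring

lemma Lf_segpt (c₁ c₂ θ : ℝ) (u v : Pt) :
    Lf c₁ c₂ (u + θ • (v - u)) = Lf c₁ c₂ u + θ * (Lf c₁ c₂ v - Lf c₁ c₂ u) := by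
  show c₁ * (u 0 + θ * (v 0 - u 0)) + c₂ * (u 1 + θ * (v 1 - u 1)) = _
  unfold Lf; ring

lemma hull_le {c₁ c₂ d : ℝ} {S : Set Pt} (h : ∀ s ∈ S, Lf c₁ c₂ s ≤ d) :
    convexHull ℝ S ⊆ {z | Lf c₁ c₂ z ≤ d} :=
  convexHull_min h (convex_halfSpace_le (Lf_lin c₁ c₂) d)

lemma hull_ge {c₁ c₂ d : ℝ} {S : Set Pt} (h : ∀ s ∈ S, d ≤ Lf c₁ c₂ s) :
    convexHull ℝ S ⊆ {z | d ≤ Lf c₁ c₂ z} :=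
  convexHull_min h (convex_halfSpace_ge (Lf_lin c₁ c₂) d)

/-- Face lemma: points of the hull where a supporting functional attains its max lie in the
hull of the vertices attaining the max. -/
lemma face {c₁ c₂ d : ℝ} {S : Set Pt} (h : ∀ s ∈ S, Lf c₁ c₂ s ≤ d) {x : Pt}
    (hx : x ∈ convexHull ℝ S) (hxd : d ≤ Lf c₁ c₂ x) :
    x ∈ convexHull ℝ {s | s ∈ S ∧ Lf c₁ c₂ s = d} := by
  set A : Set Pt := {z | Lf c₁ c₂ z < d} ∪ convexHull ℝ {s | s ∈ S ∧ Lf c₁ c₂ s = d} with hA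
  have hAface : convexHull ℝ {s | s ∈ S ∧ Lf c₁ c₂ s = d} ⊆ {z | Lf c₁ c₂ z ≤ d} :=
    hull_le (fun s hs => le_of_eq hs.2)
  have hconv : Convex ℝ A := by
    intro u hu v hv a b ha hb hab
    rcases hu with hu | hu
    · rcases eq_or_lt_of_le ha with h0 | h0
      · have : b = 1 := by linarith
        subst this; rw [← h0]; simpa using hv
      · left
        have hvd : Lf c₁ c₂ v ≤ d := by
          rcases hv with hv | hv
          · exact le_of_lt hv
          · exact hAface hv
        show Lf c₁ c₂ (a • u + b • v) < d
        rw [Lf_combo]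
        calc a * Lf c₁ c₂ u + b * Lf c₁ c₂ v < a * d + b * d := by
              rcases eq_or_lt_of_le hb with h0b | h0b
              · rw [← h0b]; simp; exact (mul_lt_mul_iff_right₀ h0).2 hu
              · apply add_lt_add_of_lt_of_le ((mul_lt_mul_iff_right₀ h0).2 hu)
                exact (mul_le_mul_iff_right₀ h0b).2 hvd
          _ = d := by rw [← add_mul, hab, one_mul]
    · rcases hv with hv | hv
      · rcases eq_or_lt_of_le hb with h0 | h0
        · have : a = 1 := by linarith
          subst this; rw [← h0]
          have he : (1:ℝ) • u + (0:ℝ) • v = u := by simp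
          rw [he]; exact Set.mem_union_right _ hu
        · left
          have hud : Lf c₁ c₂ u ≤ d := hAface hu
          show Lf c₁ c₂ (a • u + b • v) < d
          rw [Lf_combo]
          calc a * Lf c₁ c₂ u + b * Lf c₁ c₂ v < a * d + b * d := by
                rcases eq_or_lt_of_le ha with h0a | h0a
                · rw [← h0a]; simp; exact (mul_lt_mul_iff_right₀ h0).2 hv
                · apply add_lt_add_of_le_of_lt ((mul_le_mul_iff_right₀ h0a).2 hud)
                  exact (mul_lt_mul_iff_right₀ h0).2 hv
            _ = d := by rw [← add_mul, hab, one_mul]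
      · right; exact (convex_convexHull ℝ _) hu hv ha hb hab
  have hSA : S ⊆ A := by
    intro s hs
    rcases lt_or_eq_of_le (h s hs) with hlt | heq
    · left; exact hlt
    · right; exact subset_convexHull ℝ _ ⟨hs, heq⟩
  have := convexHull_min hSA hconv hx
  rcases this with h1 | h1
  · exact absurd h1 (by simp only [Set.mem_setOf_eq]; linarith)
  · exact h1


/-- Crossing lemma. -/
lemma cross {c₁ c₂ d : ℝ} {u v : Pt} (hu : Lf c₁ c₂ u ≤ d) (hv : d ≤ Lf c₁ c₂ v) :
    ∃ w ∈ segment ℝ u v, Lf c₁ c₂ w = d := by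
  rcases eq_or_lt_of_le hu with he | hlt
  · exact ⟨u, left_mem_segment ℝ u v, he⟩
  · set θ : ℝ := (d - Lf c₁ c₂ u) / (Lf c₁ c₂ v - Lf c₁ c₂ u) with hθ
    have hden : 0 < Lf c₁ c₂ v - Lf c₁ c₂ u := by linarith
    have hθ0 : 0 ≤ θ := div_nonneg (by linarith) (le_of_lt hden)
    have hθ1 : θ ≤ 1 := by
      rw [hθ, div_le_one hden]; linarith
    refine ⟨u + θ • (v - u), ?_, ?_⟩
    · rw [segment_eq_image']
      exact ⟨θ, ⟨hθ0, hθ1⟩, rfl⟩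
    · rw [Lf_segpt, hθ, div_mul_cancel₀]
      · ring
      · exact ne_of_gt hden

/-- Betweenness on a segment. -/
lemma between {u v z w₁ w₂ : Pt} (hz : z ∈ segment ℝ u v) (h1 : w₁ ∈ segment ℝ u z)
    (h2 : w₂ ∈ segment ℝ z v) : z ∈ segment ℝ w₁ w₂ := by
  rw [segment_eq_image'] at hz h1 h2
  obtain ⟨θ, ⟨hθ0, hθ1⟩, hzdef⟩ := hz
  obtain ⟨s, ⟨hs0, hs1⟩, h1def⟩ := h1
  obtain ⟨t, ⟨ht0, ht1⟩, h2def⟩ := h2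
  set A : ℝ := θ * (1 - s) with hAdef
  set B : ℝ := t * (1 - θ) with hBdef
  have hA : 0 ≤ A := mul_nonneg (by linarith) (by linarith)
  have hB : 0 ≤ B := mul_nonneg (by linarith) (by linarith)
  have hz1 : z - w₁ = A • (v - u) := by
    rw [← h1def, ← hzdef]; rw [hAdef]
    rw [show u + θ • (v - u) - (u + s • (u + θ • (v - u) - u)) =
      (θ - s * θ) • (v - u) by module]
    congr 1; ring
  have hw21 : w₂ - w₁ = (A + B) • (v - u) := by
    rw [← h1def, ← h2def, ← hzdef, hAdef, hBdef]
    rw [show u + θ • (v - u) + t • (v - (u + θ • (v - u))) - (u + s • (u + θ • (v - u) - u)) =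
      (θ - s * θ + t * (1 - θ)) • (v - u) by module]
    congr 1; ring
  rcases eq_or_lt_of_le hA with hA0 | hA0
  · have : z = w₁ := by
      have : z - w₁ = 0 := by rw [hz1, ← hA0]; simp
      have := sub_eq_zero.mp this; exact this
    rw [this]; exact left_mem_segment ℝ w₁ w₂
  · have hABpos : 0 < A + B := by linarith
    rw [segment_eq_image']
    refine ⟨A / (A + B), ⟨div_nonneg (le_of_lt hA0) (le_of_lt hABpos),
      by rw [div_le_one hABpos]; linarith⟩, ?_⟩
    show w₁ + (A / (A + B)) • (w₂ - w₁) = z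
    rw [hw21, smul_smul, div_mul_cancel₀ _ (ne_of_gt hABpos), ← hz1]
    abel

/-- Reconstruct membership in a parabola chord segment. -/
lemma mem_seg_pp {x m : ℝ} (hxm : x < m) {w : Pt} (h0 : x ≤ w 0) (h1 : w 0 ≤ m)
    (hch : w 1 = (x + m) * w 0 - x * m) : w ∈ segment ℝ (pp x) (pp m) := by
  rw [segment_eq_image']
  refine ⟨(w 0 - x) / (m - x), ⟨div_nonneg (by linarith) (by linarith),
    by rw [div_le_one (by linarith)]; linarith⟩, ?_⟩
  have hmx : m - x ≠ 0 := by linarith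
  ext i
  fin_cases i
  · show x + (w 0 - x) / (m - x) * (m - x) = w 0
    field_simp
    ring
  · show x ^ 2 + (w 0 - x) / (m - x) * (m ^ 2 - x ^ 2) = w 1
    rw [hch]; field_simp; ring

/-- A level set of a nonzero functional has empty interior. -/
lemma interior_level_empty {c₁ c₂ d : ℝ} (h : c₁ ≠ 0 ∨ c₂ ≠ 0) :
    interior {z : Pt | Lf c₁ c₂ z = d} = ∅ := by
  by_contra hne
  obtain ⟨z, hz⟩ := Set.nonempty_iff_ne_empty.mpr hne
  obtain ⟨ε, hε, hball⟩ := Metric.isOpen_iff.1 isOpen_interior z hz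
  set vv : Pt := WithLp.toLp 2 ![c₁, c₂] with hvv
  have hvpos : 0 < c₁ ^ 2 + c₂ ^ 2 := by
    rcases h with h | h
    · have h2 := sq_pos_of_ne_zero h; nlinarith [sq_nonneg c₂]
    · have h2 := sq_pos_of_ne_zero h; nlinarith [sq_nonneg c₁]
  set δ : ℝ := ε / (2 * (‖vv‖ + 1)) with hδ
  have hnorm : (0:ℝ) < ‖vv‖ + 1 := by positivity
  have hδpos : 0 < δ := by positivity
  have hmem : z + δ • vv ∈ Metric.ball z ε := by
    rw [Metric.mem_ball, dist_eq_norm]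
    have : z + δ • vv - z = δ • vv := by abel
    rw [this, norm_smul]
    have h1 : ‖δ‖ = δ := abs_of_pos hδpos
    rw [h1, hδ]
    rw [div_mul_eq_mul_div, div_lt_iff₀ (by positivity)]
    nlinarith [norm_nonneg vv]
  have h1 : z + δ • vv ∈ {z : Pt | Lf c₁ c₂ z = d} := interior_subset (hball hmem)
  have h2 : z ∈ {z : Pt | Lf c₁ c₂ z = d} := interior_subset hz
  simp only [Set.mem_setOf_eq] at h1 h2
  have h3 : Lf c₁ c₂ (z + δ • vv) = Lf c₁ c₂ z + δ * (c₁ ^ 2 + c₂ ^ 2) := by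
    show c₁ * (z 0 + δ * vv 0) + c₂ * (z 1 + δ * vv 1) = _
    have e0 : vv 0 = c₁ := rfl
    have e1 : vv 1 = c₂ := rfl
    rw [e0, e1]; unfold Lf; ring
  rw [h1, h2] at h3
  have : δ * (c₁ ^ 2 + c₂ ^ 2) = 0 := by linarith
  rcases mul_eq_zero.mp this with h | h
  · exact absurd h (ne_of_gt hδpos)
  · exact absurd h (ne_of_gt hvpos)

/-- Parabola points are not collinear. -/
lemma pp_noncollinear {a b c : ℝ} (hab : a < b) (hbc : b < c) :
    ¬ Collinear ℝ ({pp a, pp b, pp c} : Set Pt) := by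
  intro hcol
  obtain ⟨v, hv⟩ := (collinear_iff_of_mem (Set.mem_insert (pp a) _)).1 hcol
  obtain ⟨t₂, ht₂⟩ := hv (pp b) (by simp)
  obtain ⟨t₃, ht₃⟩ := hv (pp c) (by simp)
  have hb0 : b = t₂ * v 0 + a := by
    have := congrArg (fun z : Pt => z 0) ht₂; simpa using this
  have hb1 : b ^ 2 = t₂ * v 1 + a ^ 2 := by
    have := congrArg (fun z : Pt => z 1) ht₂; simpa using this
  have hc0 : c = t₃ * v 0 + a := by
    have := congrArg (fun z : Pt => z 0) ht₃; simpa using this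
  have hc1 : c ^ 2 = t₃ * v 1 + a ^ 2 := by
    have := congrArg (fun z : Pt => z 1) ht₃; simpa using this
  have key : (b - a) * (c ^ 2 - a ^ 2) - (c - a) * (b ^ 2 - a ^ 2) = 0 := by
    linear_combination (c ^ 2 - a ^ 2) * hb0 + (t₂ * v 0) * hc1 - (b ^ 2 - a ^ 2) * hc0 -
      (t₃ * v 0) * hb1
  have expand : (b - a) * (c ^ 2 - a ^ 2) - (c - a) * (b ^ 2 - a ^ 2)
      = (b - a) * (c - a) * (c - b) := by ring
  have hpos : 0 < (b - a) * (c - a) * (c - b) :=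
    mul_pos (mul_pos (by linarith) (by linarith)) (by linarith)
  rw [expand] at key; linarith


/-! ### Triangles on the parabola -/

def mkT (a b c : ℝ) : Tri := ⟨pp a, pp b, pp c⟩

lemma mkT_verts (a b c : ℝ) : (mkT a b c).verts = {pp a, pp b, pp c} := rfl

lemma mkT_carrier (a b c : ℝ) :
    (mkT a b c).carrier = convexHull ℝ {pp a, pp b, pp c} := rfl

lemma hull3_le {c₁ c₂ d : ℝ} {u v w : Pt} (hu : Lf c₁ c₂ u ≤ d) (hv : Lf c₁ c₂ v ≤ d)
    (hw : Lf c₁ c₂ w ≤ d) : convexHull ℝ ({u, v, w} : Set Pt) ⊆ {z | Lf c₁ c₂ z ≤ d} := by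
  apply hull_le
  rintro s (rfl | rfl | rfl) <;> assumption

lemma hull3_ge {c₁ c₂ d : ℝ} {u v w : Pt} (hu : d ≤ Lf c₁ c₂ u) (hv : d ≤ Lf c₁ c₂ v)
    (hw : d ≤ Lf c₁ c₂ w) : convexHull ℝ ({u, v, w} : Set Pt) ⊆ {z | d ≤ Lf c₁ c₂ z} := by
  have := hull3_le (c₁ := -c₁) (c₂ := -c₂) (d := -d) (u := u) (v := v) (w := w)
    (by unfold Lf at *; simp only [Set.mem_setOf_eq]; nlinarith [hu])
    (by unfold Lf at *; simp only [Set.mem_setOf_eq]; nlinarith [hv])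
    (by unfold Lf at *; simp only [Set.mem_setOf_eq]; nlinarith [hw])
  intro z hz
  have h2 := this hz
  simp only [Set.mem_setOf_eq] at h2 ⊢
  unfold Lf at *; nlinarith [h2]

/-- The statement of the `proper` field of `Mesh`, for a pair. -/
def Conc (T T' : Tri) : Prop :=
  interior T.carrier ∩ interior T'.carrier = ∅ ∧
    (T.carrier ∩ T'.carrier = ∅ ∨
      (∃ v ∈ T.verts ∩ T'.verts, T.carrier ∩ T'.carrier = {v}) ∨
      (∃ e ∈ T.edgeSegs ∩ T'.edgeSegs, T.carrier ∩ T'.carrier = e))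

lemma Conc.symm {T T' : Tri} (h : Conc T T') : Conc T' T := by
  obtain ⟨h1, h2⟩ := h
  constructor
  · rw [Set.inter_comm]; exact h1
  · rw [Set.inter_comm]
    rcases h2 with h2 | ⟨v, hv, h2⟩ | ⟨e, he, h2⟩
    · left; exact h2
    · right; left; exact ⟨v, by rw [Set.inter_comm]; exact hv, h2⟩
    · right; right; exact ⟨e, by rw [Set.inter_comm]; exact he, h2⟩

/-- If the intersection is contained in a level set, interiors are disjoint. -/
lemma int_disj {T T' : Tri} {c₁ c₂ d : ℝ} (h : c₁ ≠ 0 ∨ c₂ ≠ 0)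
    (hsub : T.carrier ∩ T'.carrier ⊆ {z | Lf c₁ c₂ z = d}) :
    interior T.carrier ∩ interior T'.carrier = ∅ := by
  rw [← interior_inter]
  rw [← Set.subset_empty_iff, ← interior_level_empty (d := d) h]
  exact interior_mono hsub

/-- Case: the two triangles live on the two sides of a vertical line. -/
lemma far_pair {a b c a' b' c' : ℝ} (hab : a < b) (hbc : b < c)
    (hab' : a' < b') (hbc' : b' < c') (h : c ≤ a') {T T' : Tri}
    (hT : T = mkT a b c) (hT' : T' = mkT a' b' c') : Conc T T' := by
  subst hT hT'
  have hTc : (mkT a b c).carrier ⊆ {z | Lf 1 0 z ≤ c} := by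
    rw [mkT_carrier]
    exact hull3_le (by simp; linarith) (by simp; linarith) (by simp)
  have hT'c : (mkT a' b' c').carrier ⊆ {z | c ≤ Lf 1 0 z} := by
    rw [mkT_carrier]
    exact hull3_ge (by simp; linarith) (by simp; linarith) (by simp; linarith)
  have hsub : (mkT a b c).carrier ∩ (mkT a' b' c').carrier ⊆ {z | Lf 1 0 z = c} := by
    rintro z ⟨h1, h2⟩
    exact le_antisymm (hTc h1) (hT'c h2)
  refine ⟨int_disj (Or.inl one_ne_zero) hsub, ?_⟩
  rcases eq_or_lt_of_le h with heq | hlt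
  · -- shared vertex pp c = pp a'
    right; left
    refine ⟨pp c, ⟨by simp [mkT_verts], by rw [← heq]; simp [mkT_verts]⟩, ?_⟩
    apply Set.Subset.antisymm
    · rintro z ⟨h1, h2⟩
      have hz : Lf 1 0 z = c := hsub ⟨h1, h2⟩
      rw [mkT_carrier] at h1
      have hface := face (d := c) (S := {pp a, pp b, pp c})
        (by rintro s (rfl | rfl | rfl) <;> simp <;> linarith) h1 (le_of_eq hz.symm)
      have hset : {s | s ∈ ({pp a, pp b, pp c} : Set Pt) ∧ Lf 1 0 s = c} = {pp c} := by
        ext s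
        simp only [Set.mem_setOf_eq, Set.mem_insert_iff, Set.mem_singleton_iff]
        constructor
        · rintro ⟨rfl | rfl | rfl, hv⟩
          · simp at hv; linarith
          · simp at hv; linarith
          · rfl
        · rintro rfl; exact ⟨Or.inr (Or.inr rfl), by simp⟩
      rw [hset, convexHull_singleton] at hface
      exact hface
    · rintro z rfl
      constructor
      · rw [mkT_carrier]; exact subset_convexHull ℝ _ (by simp)
      · rw [mkT_carrier, ← heq]; exact subset_convexHull ℝ _ (by simp)
  · -- disjoint
    left
    have hT'c2 : (mkT a' b' c').carrier ⊆ {z | a' ≤ Lf 1 0 z} := by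
      rw [mkT_carrier]
      exact hull3_ge (by simp) (by simp; linarith) (by simp; linarith)
    ext z
    simp only [Set.mem_inter_iff, Set.mem_empty_iff_false, iff_false, not_and]
    intro h1 h2
    have := hTc h1
    have := hT'c2 h2
    simp only [Set.mem_setOf_eq] at *
    linarith

/-- Case: triangle `T'` lies inside the chord region cut off by an edge of `T`. -/
lemma chord_pair {e₁ e₂ o a' b' c' : ℝ} (h12 : e₁ < e₂)
    (hab' : a' < b') (hbc' : b' < c') (hin : e₁ ≤ a') (hin' : c' ≤ e₂)
    (hout : 0 < (o - e₁) * (o - e₂)) {T T' : Tri}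
    (hTv : T.verts = {pp e₁, pp e₂, pp o}) (hT' : T' = mkT a' b' c')
    (hTe : segment ℝ (pp e₁) (pp e₂) ∈ T.edgeSegs) : Conc T T' := by
  subst hT'
  have hd : ∀ t : ℝ, Lf (-(e₁+e₂)) 1 (pp t) - (-(e₁*e₂)) = (t - e₁) * (t - e₂) := by
    intro t; simp [Lf]; ring
  have hd2 : ∀ t : ℝ, Lf (e₁+e₂) (-1) (pp t) - e₁*e₂ = -((t - e₁) * (t - e₂)) := by
    intro t; simp [Lf]; ring
  have hflip : ∀ z : Pt, Lf (e₁+e₂) (-1) z = -(Lf (-(e₁+e₂)) 1 z) := by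
    intro z; unfold Lf; ring
  set d : ℝ := -(e₁*e₂) with hddef
  have hTcar : T.carrier = convexHull ℝ ({pp e₁, pp e₂, pp o} : Set Pt) := by
    rw [Tri.carrier, hTv]
  have hTge : T.carrier ⊆ {z | d ≤ Lf (-(e₁+e₂)) 1 z} := by
    rw [hTcar]
    apply hull_ge
    rintro s (rfl | rfl | rfl)
    · have := hd e₁; nlinarith
    · have := hd e₂; nlinarith
    · have := hd o; nlinarith
  have hT'le : (mkT a' b' c').carrier ⊆ {z | Lf (-(e₁+e₂)) 1 z ≤ d} := by
    rw [mkT_carrier]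
    apply hull_le
    rintro s (rfl | rfl | rfl)
    · have := hd a'; nlinarith
    · have := hd b'; nlinarith
    · have := hd c'; nlinarith
  have hsub : T.carrier ∩ (mkT a' b' c').carrier ⊆ {z | Lf (-(e₁+e₂)) 1 z = d} := by
    rintro z ⟨h1, h2⟩
    exact le_antisymm (hT'le h2) (hTge h1)
  have hseg : T.carrier ∩ (mkT a' b' c').carrier ⊆ segment ℝ (pp e₁) (pp e₂) := by
    rintro z ⟨h1, h2⟩
    have hz : Lf (-(e₁+e₂)) 1 z = d := hsub ⟨h1, h2⟩
    rw [hTcar] at h1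
    have hneg : ∀ s ∈ ({pp e₁, pp e₂, pp o} : Set Pt), Lf (e₁+e₂) (-1) s ≤ e₁*e₂ := by
      rintro s (rfl | rfl | rfl)
      · have := hd2 e₁; nlinarith
      · have := hd2 e₂; nlinarith
      · have := hd2 o; nlinarith
    have hzneg : e₁*e₂ ≤ Lf (e₁+e₂) (-1) z := by
      rw [hflip z, hz]; simp [hddef]
    have hface := face hneg h1 hzneg
    have hset : {s | s ∈ ({pp e₁, pp e₂, pp o} : Set Pt) ∧ Lf (e₁+e₂) (-1) s = e₁*e₂}
        = {pp e₁, pp e₂} := by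
      ext s
      simp only [Set.mem_setOf_eq, Set.mem_insert_iff, Set.mem_singleton_iff]
      constructor
      · rintro ⟨rfl | rfl | rfl, hv⟩
        · left; rfl
        · right; rfl
        · exfalso; have := hd2 o; nlinarith
      · rintro (rfl | rfl)
        · refine ⟨Or.inl rfl, ?_⟩
          have := hd2 e₁; nlinarith
        · refine ⟨Or.inr (Or.inl rfl), ?_⟩
          have := hd2 e₂; nlinarith
    rw [hset, convexHull_pair] at hface
    exact hface
  refine ⟨int_disj (Or.inr one_ne_zero) hsub, ?_⟩
  have hb'1 : e₁ < b' := lt_of_le_of_lt hin hab'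
  have hb'2 : b' < e₂ := lt_of_lt_of_le hbc' hin'
  have hface' : T.carrier ∩ (mkT a' b' c').carrier ⊆
      convexHull ℝ {s | s ∈ ({pp a', pp b', pp c'} : Set Pt) ∧ Lf (-(e₁+e₂)) 1 s = d} := by
    rintro z ⟨h1, h2⟩
    have hz : Lf (-(e₁+e₂)) 1 z = d := hsub ⟨h1, h2⟩
    rw [mkT_carrier] at h2
    apply face (d := d) ?_ h2 (le_of_eq hz.symm)
    rintro s (rfl | rfl | rfl)
    · have := hd a'; nlinarith
    · have := hd b'; nlinarith
    · have := hd c'; nlinarith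
  rcases eq_or_lt_of_le hin with heq1 | hlt1 <;> rcases eq_or_lt_of_le hin' with heq2 | hlt2
  · -- shared edge
    right; right
    refine ⟨segment ℝ (pp e₁) (pp e₂), ⟨hTe, ?_⟩, ?_⟩
    · show segment ℝ (pp e₁) (pp e₂) ∈ (mkT a' b' c').edgeSegs
      have he : segment ℝ (pp e₁) (pp e₂) = segment ℝ (pp a') (pp c') := by
        rw [heq1, heq2]
      rw [he]
      exact Or.inr (Or.inr rfl)
    · apply Set.Subset.antisymm hseg
      intro z hz
      have hz' : z ∈ segment ℝ (pp a') (pp c') := by rw [← heq1, heq2]; exact hz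
      have hz2 : z ∈ convexHull ℝ ({pp e₁, pp e₂} : Set Pt) := by
        rw [convexHull_pair]; exact hz
      have hz2' : z ∈ convexHull ℝ ({pp a', pp c'} : Set Pt) := by
        rw [convexHull_pair]; exact hz'
      constructor
      · rw [hTcar]
        refine convexHull_mono ?_ hz2
        rintro s (rfl | rfl)
        exacts [Or.inl rfl, Or.inr (Or.inl rfl)]
      · rw [mkT_carrier]
        refine convexHull_mono ?_ hz2'
        rintro s (rfl | rfl)
        exacts [Or.inl rfl, Or.inr (Or.inr rfl)]
  · -- shared vertex pp a' (= pp e₁)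
    right; left
    refine ⟨pp a', ⟨by rw [hTv, ← heq1]; exact Or.inl rfl, Or.inl rfl⟩, ?_⟩
    apply Set.Subset.antisymm
    · intro z hz
      have h2 := hface' hz
      have hset : {s | s ∈ ({pp a', pp b', pp c'} : Set Pt) ∧ Lf (-(e₁+e₂)) 1 s = d}
          = {pp a'} := by
        ext s
        simp only [Set.mem_setOf_eq, Set.mem_insert_iff, Set.mem_singleton_iff]
        constructor
        · rintro ⟨rfl | rfl | rfl, hv⟩
          · rfl
          · exfalso; have := hd b'; nlinarith
          · exfalso; have := hd c'
            have hc1 : e₁ < c' := by linarith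
            nlinarith
        · rintro rfl
          refine ⟨Or.inl rfl, ?_⟩
          have := hd a'; nlinarith [heq1]
      rw [hset, convexHull_singleton] at h2
      exact h2
    · rintro z rfl
      constructor
      · rw [hTcar, ← heq1]; exact subset_convexHull ℝ _ (Or.inl rfl)
      · rw [mkT_carrier]; exact subset_convexHull ℝ _ (Or.inl rfl)
  · -- shared vertex pp c' (= pp e₂)
    right; left
    refine ⟨pp c', ⟨by rw [hTv, heq2]; exact Or.inr (Or.inl rfl), Or.inr (Or.inr rfl)⟩, ?_⟩
    apply Set.Subset.antisymm
    · intro z hz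
      have h2 := hface' hz
      have hset : {s | s ∈ ({pp a', pp b', pp c'} : Set Pt) ∧ Lf (-(e₁+e₂)) 1 s = d}
          = {pp c'} := by
        ext s
        simp only [Set.mem_setOf_eq, Set.mem_insert_iff, Set.mem_singleton_iff]
        constructor
        · rintro ⟨rfl | rfl | rfl, hv⟩
          · exfalso; have := hd a'
            have hc1 : a' < e₂ := by linarith
            nlinarith
          · exfalso; have := hd b'; nlinarith
          · rfl
        · rintro rfl
          refine ⟨Or.inr (Or.inr rfl), ?_⟩
          have := hd c'; nlinarith [heq2]
      rw [hset, convexHull_singleton] at h2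
      exact h2
    · rintro z rfl
      constructor
      · rw [hTcar, heq2]; exact subset_convexHull ℝ _ (Or.inr (Or.inl rfl))
      · rw [mkT_carrier]; exact subset_convexHull ℝ _ (Or.inr (Or.inr rfl))
  · -- disjoint
    left
    rw [← Set.subset_empty_iff]
    intro z hz
    have h2 := hface' hz
    have hset : {s | s ∈ ({pp a', pp b', pp c'} : Set Pt) ∧ Lf (-(e₁+e₂)) 1 s = d}
        = (∅ : Set Pt) := by
      ext s
      simp only [Set.mem_setOf_eq, Set.mem_empty_iff_false, iff_false, not_and]
      rintro (rfl | rfl | rfl) <;> intro hv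
      · have := hd a'
        have hc1 : a' < e₂ := by linarith
        nlinarith
      · have := hd b'; nlinarith
      · have := hd c'
        have hc1 : e₁ < c' := by linarith
        nlinarith
    rw [hset, convexHull_empty] at h2
    exact h2

/-! ### Triples -/

def OrdT (τ : ℝ × ℝ × ℝ) : Prop := τ.1 < τ.2.1 ∧ τ.2.1 < τ.2.2

def tri (τ : ℝ × ℝ × ℝ) : Tri := mkT τ.1 τ.2.1 τ.2.2

/-- Separation configuration of two triples. -/
def SepT (τ τ' : ℝ × ℝ × ℝ) : Prop :=
  τ.2.2 ≤ τ'.1 ∨ τ'.2.2 ≤ τ.1 ∨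
  (τ.1 ≤ τ'.1 ∧ τ'.2.2 ≤ τ.2.1) ∨ (τ.2.1 ≤ τ'.1 ∧ τ'.2.2 ≤ τ.2.2) ∨
  (τ'.1 ≤ τ.1 ∧ τ.2.2 ≤ τ'.2.1) ∨ (τ'.2.1 ≤ τ.1 ∧ τ.2.2 ≤ τ'.2.2)

lemma tri_verts_rot (a b c : ℝ) : (mkT a b c).verts = {pp b, pp c, pp a} := by
  rw [mkT_verts]; ext s
  simp only [Set.mem_insert_iff, Set.mem_singleton_iff]; tauto

lemma sep_conc {τ τ' : ℝ × ℝ × ℝ} (hO : OrdT τ) (hO' : OrdT τ') (hS : SepT τ τ') :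
    Conc (tri τ) (tri τ') := by
  obtain ⟨a, b, c⟩ := τ
  obtain ⟨a', b', c'⟩ := τ'
  obtain ⟨h1, h2⟩ := hO
  obtain ⟨h1', h2'⟩ := hO'
  simp only [OrdT, SepT] at *
  rcases hS with hS | hS | ⟨hSa, hSb⟩ | ⟨hSa, hSb⟩ | ⟨hSa, hSb⟩ | ⟨hSa, hSb⟩
  · exact far_pair h1 h2 h1' h2' hS rfl rfl
  · exact (far_pair h1' h2' h1 h2 hS rfl rfl).symm
  · exact chord_pair h1 h1' h2' hSa hSb
      (by nlinarith) (mkT_verts a b c) rfl (Or.inl rfl)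
  · exact chord_pair h2 h1' h2' hSa hSb
      (by nlinarith) (tri_verts_rot a b c) rfl (Or.inr (Or.inl rfl))
  · exact (chord_pair h1' h1 h2 hSa hSb
      (by nlinarith) (mkT_verts a' b' c') rfl (Or.inl rfl)).symm
  · exact (chord_pair h2' h1 h2 hSa hSb
      (by nlinarith) (tri_verts_rot a' b' c') rfl (Or.inr (Or.inl rfl))).symm

/-! ### Centroids -/

def ctd (τ : ℝ × ℝ × ℝ) : Pt :=
  (1/3 : ℝ) • pp τ.1 + (1/3 : ℝ) • pp τ.2.1 + (1/3 : ℝ) • pp τ.2.2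

lemma ctd_mem (τ : ℝ × ℝ × ℝ) : ctd τ ∈ (tri τ).carrier := by
  obtain ⟨a, b, c⟩ := τ
  have hu : pp a ∈ (tri (a, b, c)).carrier := subset_convexHull ℝ _ (Or.inl rfl)
  have hv : pp b ∈ (tri (a, b, c)).carrier := subset_convexHull ℝ _ (Or.inr (Or.inl rfl))
  have hw : pp c ∈ (tri (a, b, c)).carrier := subset_convexHull ℝ _ (Or.inr (Or.inr rfl))
  have hcx : Convex ℝ (tri (a, b, c)).carrier := convex_convexHull ℝ _
  have hm := hcx hv hw (by norm_num : (0:ℝ) ≤ (1:ℝ)/2) (by norm_num : (0:ℝ) ≤ (1:ℝ)/2)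
    (by norm_num)
  have hc := hcx hu hm (by norm_num : (0:ℝ) ≤ (1:ℝ)/3) (by norm_num : (0:ℝ) ≤ (2:ℝ)/3)
    (by norm_num)
  have : (1/3 : ℝ) • pp a + (2/3 : ℝ) • ((1/2 : ℝ) • pp b + (1/2 : ℝ) • pp c) = ctd (a,b,c) := by
    unfold ctd; module
  rw [this] at hc
  exact hc

lemma Lf_ctd (c₁ c₂ : ℝ) (τ : ℝ × ℝ × ℝ) :
    Lf c₁ c₂ (ctd τ) = (Lf c₁ c₂ (pp τ.1) + Lf c₁ c₂ (pp τ.2.1) + Lf c₁ c₂ (pp τ.2.2)) / 3 := by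
  obtain ⟨a, b, c⟩ := τ
  unfold Lf ctd; simp only [PiLp.add_apply, PiLp.smul_apply, smul_eq_mul, pp_zero, pp_one]; ring

lemma not_mem_of_gt {τ' : ℝ × ℝ × ℝ} {c₁ c₂ d : ℝ}
    (h₁ : Lf c₁ c₂ (pp τ'.1) ≤ d) (h₂ : Lf c₁ c₂ (pp τ'.2.1) ≤ d)
    (h₃ : Lf c₁ c₂ (pp τ'.2.2) ≤ d) {z : Pt} (hz : d < Lf c₁ c₂ z) :
    z ∉ (tri τ').carrier := by
  intro hmem
  have := hull3_le h₁ h₂ h₃ hmem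
  simp only [Set.mem_setOf_eq] at this
  linarith

lemma ctd_not_mem {τ τ' : ℝ × ℝ × ℝ} (hO : OrdT τ) (hO' : OrdT τ') (hS : SepT τ τ') :
    ctd τ ∉ (tri τ').carrier := by
  obtain ⟨a, b, c⟩ := τ
  obtain ⟨a', b', c'⟩ := τ'
  obtain ⟨h1, h2⟩ := hO
  obtain ⟨h1', h2'⟩ := hO'
  simp only [OrdT, SepT] at *
  have hval : ∀ c₁ c₂ : ℝ, Lf c₁ c₂ (ctd (a,b,c))
      = (Lf c₁ c₂ (pp a) + Lf c₁ c₂ (pp b) + Lf c₁ c₂ (pp c)) / 3 := fun c₁ c₂ =>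
    Lf_ctd c₁ c₂ (a, b, c)
  rcases hS with hS | hS | ⟨hSa, hSb⟩ | ⟨hSa, hSb⟩ | ⟨hSa, hSb⟩ | ⟨hSa, hSb⟩
  · -- τ' to the right : use -x
    apply not_mem_of_gt (c₁ := -1) (c₂ := 0) (d := -a')
      (by simp [Lf]; try linarith) (by simp [Lf]; try linarith) (by simp [Lf]; try linarith)
    rw [hval]; simp only [Lf_pp]; nlinarith
  · -- τ' to the left : use x
    apply not_mem_of_gt (c₁ := 1) (c₂ := 0) (d := c')
      (by simp [Lf]; try linarith) (by simp [Lf]; try linarith) (by simp [Lf]; try linarith)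
    rw [hval]; simp only [Lf_pp]; nlinarith
  · -- τ' inside chord (a,b) : use chord functional of (a,b)
    apply not_mem_of_gt (c₁ := -(a+b)) (c₂ := 1) (d := -(a*b))
      (by simp [Lf]; try nlinarith) (by simp [Lf]; try nlinarith) (by simp [Lf]; try nlinarith)
    rw [hval]; simp only [Lf_pp]; nlinarith
  · -- τ' inside chord (b,c)
    apply not_mem_of_gt (c₁ := -(b+c)) (c₂ := 1) (d := -(b*c))
      (by simp [Lf]; try nlinarith) (by simp [Lf]; try nlinarith) (by simp [Lf]; try nlinarith)
    rw [hval]; simp only [Lf_pp]; nlinarith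
  · -- τ inside chord (a',b') of τ' : τ' carrier is above that chord, centroid strictly below
    apply not_mem_of_gt (c₁ := a'+b') (c₂ := -1) (d := a'*b')
      (by simp [Lf]; try nlinarith) (by simp [Lf]; try nlinarith) (by simp [Lf]; try nlinarith)
    rw [hval]; simp only [Lf_pp]
    have e1 : (a - a') * (a - b') ≤ 0 := mul_nonpos_of_nonneg_of_nonpos (by linarith) (by linarith)
    have e2 : (b - a') * (b - b') < 0 := mul_neg_of_pos_of_neg (by linarith) (by linarith)
    have e3 : (c - a') * (c - b') ≤ 0 := mul_nonpos_of_nonneg_of_nonpos (by linarith) (by linarith)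
    nlinarith
  · -- τ inside chord (b',c') of τ'
    apply not_mem_of_gt (c₁ := b'+c') (c₂ := -1) (d := b'*c')
      (by simp [Lf]; try nlinarith) (by simp [Lf]; try nlinarith) (by simp [Lf]; try nlinarith)
    rw [hval]; simp only [Lf_pp]
    have e1 : (a - b') * (a - c') ≤ 0 := mul_nonpos_of_nonneg_of_nonpos (by linarith) (by linarith)
    have e2 : (b - b') * (b - c') < 0 := mul_neg_of_pos_of_neg (by linarith) (by linarith)
    have e3 : (c - b') * (c - c') ≤ 0 := mul_nonpos_of_nonneg_of_nonpos (by linarith) (by linarith)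
    nlinarith

/-! ### Chord and merge lemmas -/

lemma pp_F_le (p t : ℝ) : Lf (2*p) (-1) (pp t) ≤ p^2 := by
  simp only [Lf_pp]; nlinarith [sq_nonneg (t - p)]

/-- Points of a hull of parabola points lying on a chord line lie on the chord segment. -/
lemma hull_chord {p q : ℝ} (hpq : p < q) {I : Set ℝ} {w : Pt}
    (hw : w ∈ convexHull ℝ (pp '' I)) (hline : Lf (-(p+q)) 1 w = -(p*q)) :
    w ∈ segment ℝ (pp p) (pp q) := by
  have h1 : Lf (2*p) (-1) w ≤ p^2 := by
    refine hull_le ?_ hw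
    rintro s ⟨t, _, rfl⟩; exact pp_F_le p t
  have h2 : Lf (2*q) (-1) w ≤ q^2 := by
    refine hull_le ?_ hw
    rintro s ⟨t, _, rfl⟩; exact pp_F_le q t
  unfold Lf at h1 h2 hline
  have hrel : w 1 = (p + q) * w 0 - p * q := by linarith
  apply mem_seg_pp hpq
  · nlinarith
  · nlinarith
  · exact hrel

lemma seg_sub_hull3 {u v : Pt} {S : Set Pt} (hu : u ∈ S) (hv : v ∈ S) :
    segment ℝ u v ⊆ convexHull ℝ S := by
  rw [← convexHull_pair]
  apply convexHull_mono
  rintro s (rfl | rfl)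
  exacts [hu, hv]

/-- The merge lemma: the hull of two consecutive arcs of parabola points decomposes. -/
lemma merge {x m y : ℝ} (hxm : x < m) (hmy : m < y) {A B : Set ℝ}
    (hA : A ⊆ Set.Icc x m) (hB : B ⊆ Set.Icc m y)
    (hxA : x ∈ A) (hmA : m ∈ A) (hmB : m ∈ B) (hyB : y ∈ B) :
    convexHull ℝ (pp '' (A ∪ B)) =
      convexHull ℝ (pp '' A) ∪ convexHull ℝ (pp '' B) ∪
        convexHull ℝ ({pp x, pp m, pp y} : Set Pt) := by
  apply Set.Subset.antisymm
  · intro z hz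
    have himg : pp '' (A ∪ B) = pp '' A ∪ pp '' B := Set.image_union pp A B
    rw [himg, convexHull_union (⟨pp x, ⟨x, hxA, rfl⟩⟩ : (pp '' A).Nonempty) (⟨pp y, ⟨y, hyB, rfl⟩⟩ : (pp '' B).Nonempty)] at hz
    rw [mem_convexJoin] at hz
    obtain ⟨u, hu, v, hv, hzseg⟩ := hz
    have hzhull : z ∈ convexHull ℝ (pp '' (A ∪ B)) := by
      rw [himg]
      have hsub : segment ℝ u v ⊆ convexHull ℝ (pp '' A ∪ pp '' B) :=
        (convex_convexHull ℝ _).segment_subset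
          (convexHull_mono Set.subset_union_left hu)
          (convexHull_mono Set.subset_union_right hv)
      exact hsub hzseg
    have hG1u : Lf (-(x+m)) 1 u ≤ -(x*m) := by
      refine hull_le ?_ hu
      rintro s ⟨t, ht, rfl⟩
      obtain ⟨ht1, ht2⟩ := hA ht
      simp only [Lf_pp]; nlinarith
    have hG1v : -(x*m) ≤ Lf (-(x+m)) 1 v := by
      refine hull_ge ?_ hv
      rintro s ⟨t, ht, rfl⟩
      obtain ⟨ht1, ht2⟩ := hB ht
      simp only [Lf_pp]; nlinarith
    have hG2u : -(m*y) ≤ Lf (-(m+y)) 1 u := by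
      refine hull_ge ?_ hu
      rintro s ⟨t, ht, rfl⟩
      obtain ⟨ht1, ht2⟩ := hA ht
      simp only [Lf_pp]; nlinarith
    have hG2v : Lf (-(m+y)) 1 v ≤ -(m*y) := by
      refine hull_le ?_ hv
      rintro s ⟨t, ht, rfl⟩
      obtain ⟨ht1, ht2⟩ := hB ht
      simp only [Lf_pp]; nlinarith
    rcases le_or_gt (Lf (-(x+m)) 1 z) (-(x*m)) with hc1 | hc1
    · -- z is in the hull of A
      left; left
      obtain ⟨w, hwseg, hwval⟩ := cross (u := z) (v := v) hc1 hG1v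
      have hwhull : w ∈ convexHull ℝ (pp '' (A ∪ B)) :=
        (convex_convexHull ℝ _).segment_subset hzhull
          (convexHull_mono (by rw [himg]; exact Set.subset_union_right) hv) hwseg
      have hwchord : w ∈ segment ℝ (pp x) (pp m) := hull_chord hxm hwhull hwval
      have hzuw : z ∈ segment ℝ u w := between hzseg (left_mem_segment ℝ u z) hwseg
      have hwA : w ∈ convexHull ℝ (pp '' A) :=
        seg_sub_hull3 (⟨x, hxA, rfl⟩ : pp x ∈ pp '' A) (⟨m, hmA, rfl⟩ : pp m ∈ pp '' A) hwchord
      exact (convex_convexHull ℝ _).segment_subset hu hwA hzuw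
    rcases le_or_gt (Lf (-(m+y)) 1 z) (-(m*y)) with hc2 | hc2
    · -- z is in the hull of B
      left; right
      obtain ⟨w, hwseg, hwval⟩ := cross (u := z) (v := u) hc2 hG2u
      have hwseg' : w ∈ segment ℝ u z := by rw [segment_symm]; exact hwseg
      have hwhull : w ∈ convexHull ℝ (pp '' (A ∪ B)) :=
        (convex_convexHull ℝ _).segment_subset hzhull
          (convexHull_mono (by rw [himg]; exact Set.subset_union_left) hu) hwseg
      have hwchord : w ∈ segment ℝ (pp m) (pp y) := hull_chord hmy hwhull hwval
      have hzwv : z ∈ segment ℝ w v :=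
        between hzseg hwseg' (right_mem_segment ℝ z v)
      have hwB : w ∈ convexHull ℝ (pp '' B) :=
        seg_sub_hull3 (⟨m, hmB, rfl⟩ : pp m ∈ pp '' B) (⟨y, hyB, rfl⟩ : pp y ∈ pp '' B) hwchord
      exact (convex_convexHull ℝ _).segment_subset hwB hv hzwv
    · -- z is in the middle triangle
      right
      obtain ⟨w₁, hw1seg, hw1val⟩ := cross (u := u) (v := z) hG1u (le_of_lt hc1)
      obtain ⟨w₂, hw2seg, hw2val⟩ := cross (u := v) (v := z) hG2v (le_of_lt hc2)
      have hw2seg' : w₂ ∈ segment ℝ z v := by rw [segment_symm]; exact hw2seg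
      have hw1hull : w₁ ∈ convexHull ℝ (pp '' (A ∪ B)) :=
        (convex_convexHull ℝ _).segment_subset
          (convexHull_mono (by rw [himg]; exact Set.subset_union_left) hu) hzhull hw1seg
      have hw2hull : w₂ ∈ convexHull ℝ (pp '' (A ∪ B)) :=
        (convex_convexHull ℝ _).segment_subset
          (convexHull_mono (by rw [himg]; exact Set.subset_union_right) hv) hzhull hw2seg
      have hw1chord : w₁ ∈ segment ℝ (pp x) (pp m) := hull_chord hxm hw1hull hw1val
      have hw2chord : w₂ ∈ segment ℝ (pp m) (pp y) := hull_chord hmy hw2hull hw2val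
      have hzin : z ∈ segment ℝ w₁ w₂ := between hzseg hw1seg hw2seg'
      have h1 : w₁ ∈ convexHull ℝ ({pp x, pp m, pp y} : Set Pt) :=
        seg_sub_hull3 (Or.inl rfl) (Or.inr (Or.inl rfl)) hw1chord
      have h2 : w₂ ∈ convexHull ℝ ({pp x, pp m, pp y} : Set Pt) :=
        seg_sub_hull3 (Or.inr (Or.inl rfl)) (Or.inr (Or.inr rfl)) hw2chord
      exact (convex_convexHull ℝ _).segment_subset h1 h2 hzin
  · -- easy reverse inclusions
    apply Set.union_subset
    apply Set.union_subset
    · exact convexHull_mono (Set.image_mono (f := pp) Set.subset_union_left)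
    · exact convexHull_mono (Set.image_mono (f := pp) Set.subset_union_right)
    · apply convexHull_mono
      rintro s (rfl | rfl | rfl)
      · exact ⟨x, Or.inl hxA, rfl⟩
      · exact ⟨m, Or.inl hmA, rfl⟩
      · exact ⟨y, Or.inr hyB, rfl⟩

/-! ### Binary trees -/

inductive BT where
  | nil : BT
  | node : BT → BT → BT
deriving DecidableEq

def BT.sz : BT → ℕ
  | .nil => 0
  | .node l r => l.sz + r.sz + 1

def BT.cnt : BT → ℕ
  | .nil => 0
  | .node l r => (1 + l.cnt) * (1 + r.cnt)

/-- The root-connected subtrees of a tree. -/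
def BT.subs : BT → Finset BT
  | .nil => ∅
  | .node l r => ((insert .nil l.subs) ×ˢ (insert .nil r.subs)).image
      (fun p => BT.node p.1 p.2)

lemma BT.subs_ne_nil : ∀ (t s : BT), s ∈ t.subs → s ≠ BT.nil := by
  intro t
  cases t with
  | nil => intro s hs; simp [BT.subs] at hs
  | node l r =>
    intro s hs
    simp only [BT.subs, Finset.mem_image, Finset.mem_product] at hs
    obtain ⟨p, _, rfl⟩ := hs
    simp

lemma BT.card_subs : ∀ t : BT, t.subs.card = t.cnt := by
  intro t
  induction t with
  | nil => simp [BT.subs, BT.cnt]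
  | node l r ihl ihr =>
    rw [BT.subs, BT.cnt]
    rw [Finset.card_image_of_injective _ (by intro p q h; simpa [Prod.ext_iff] using h)]
    rw [Finset.card_product]
    rw [Finset.card_insert_of_notMem (fun h => BT.subs_ne_nil l _ h rfl),
        Finset.card_insert_of_notMem (fun h => BT.subs_ne_nil r _ h rfl), ihl, ihr]
    ring

/-! ### Realization on the parabola -/

def mid (x y : ℝ) : ℝ := (x + y) / 2

lemma mid_lt {x y : ℝ} (h : x < y) : x < mid x y ∧ mid x y < y := by
  unfold mid; constructor <;> linarith

def tt : BT → ℝ → ℝ → Set (ℝ × ℝ × ℝ)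
  | .nil, _, _ => ∅
  | .node l r, x, y => {(x, mid x y, y)} ∪ tt l x (mid x y) ∪ tt r (mid x y) y

def pars : BT → ℝ → ℝ → Set ℝ
  | .nil, _, _ => ∅
  | .node l r, x, y => {mid x y} ∪ pars l x (mid x y) ∪ pars r (mid x y) y

lemma pars_finite : ∀ (t : BT) (x y : ℝ), (pars t x y).Finite := by
  intro t
  induction t with
  | nil => intro x y; simp [pars]
  | node l r ihl ihr =>
    intro x y
    rw [pars]
    exact ((Set.finite_singleton _).union (ihl _ _)).union (ihr _ _)

lemma tt_finite : ∀ (t : BT) (x y : ℝ), (tt t x y).Finite := by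
  intro t
  induction t with
  | nil => intro x y; simp [tt]
  | node l r ihl ihr =>
    intro x y
    rw [tt]
    exact ((Set.finite_singleton _).union (ihl _ _)).union (ihr _ _)

lemma pars_subset : ∀ (t : BT) (x y : ℝ), x < y → pars t x y ⊆ Set.Ioo x y := by
  intro t
  induction t with
  | nil => intro x y _; simp [pars]
  | node l r ihl ihr =>
    intro x y hxy
    obtain ⟨h1, h2⟩ := mid_lt hxy
    rw [pars]
    apply Set.union_subset
    apply Set.union_subset
    · intro s hs; rw [Set.mem_singleton_iff] at hs; subst hs; exact ⟨h1, h2⟩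
    · intro s hs; have := ihl _ _ h1 hs; exact ⟨this.1, lt_trans this.2 h2⟩
    · intro s hs; have := ihr _ _ h2 hs; exact ⟨lt_trans h1 this.1, this.2⟩

lemma pars_ncard : ∀ (t : BT) (x y : ℝ), x < y → (pars t x y).ncard = t.sz := by
  intro t
  induction t with
  | nil => intro x y _; simp [pars, BT.sz]
  | node l r ihl ihr =>
    intro x y hxy
    obtain ⟨h1, h2⟩ := mid_lt hxy
    rw [pars, BT.sz]
    have hdisj2 : Disjoint (pars l x (mid x y)) (pars r (mid x y) y) := by
      apply Set.disjoint_left.2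
      intro s hs hs'
      have := (pars_subset l _ _ h1 hs).2
      have := (pars_subset r _ _ h2 hs').1
      linarith
    have hdisj1 : Disjoint ({mid x y} : Set ℝ) (pars l x (mid x y) ∪ pars r (mid x y) y) := by
      apply Set.disjoint_left.2
      intro s hs hs'
      rw [Set.mem_singleton_iff] at hs; subst hs
      rcases hs' with hs' | hs'
      · exact absurd (pars_subset l _ _ h1 hs').2 (lt_irrefl _)
      · exact absurd (pars_subset r _ _ h2 hs').1 (lt_irrefl _)
    rw [Set.union_assoc, Set.ncard_union_eq hdisj1 (Set.finite_singleton _)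
      ((pars_finite _ _ _).union (pars_finite _ _ _)),
      Set.ncard_union_eq hdisj2 (pars_finite _ _ _) (pars_finite _ _ _),
      Set.ncard_singleton, ihl _ _ h1, ihr _ _ h2]
    ring

/-- Basic bounds for triples in a realization. -/
lemma tt_ord : ∀ (t : BT) (x y : ℝ), x < y → ∀ τ ∈ tt t x y,
    OrdT τ ∧ x ≤ τ.1 ∧ τ.2.2 ≤ y := by
  intro t
  induction t with
  | nil => intro x y _ τ hτ; simp [tt] at hτ
  | node l r ihl ihr =>
    intro x y hxy τ hτ
    obtain ⟨h1, h2⟩ := mid_lt hxy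
    rcases hτ with (hτ | hτ) | hτ
    · rw [Set.mem_singleton_iff] at hτ; subst hτ
      exact ⟨⟨h1, h2⟩, le_refl _, le_refl _⟩
    · obtain ⟨hO, ha, hb⟩ := ihl _ _ h1 τ hτ
      exact ⟨hO, ha, le_of_lt (lt_of_le_of_lt hb h2)⟩
    · obtain ⟨hO, ha, hb⟩ := ihr _ _ h2 τ hτ
      exact ⟨hO, le_of_lt (lt_of_lt_of_le h1 ha), hb⟩

/-- Coordinates of triples are vertices. -/
lemma tt_coords : ∀ (t : BT) (x y : ℝ), ∀ τ ∈ tt t x y,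
    τ.1 ∈ {x, y} ∪ pars t x y ∧ τ.2.1 ∈ {x, y} ∪ pars t x y ∧
    τ.2.2 ∈ {x, y} ∪ pars t x y := by
  intro t
  induction t with
  | nil => intro x y τ hτ; simp [tt] at hτ
  | node l r ihl ihr =>
    intro x y τ hτ
    have hmid : mid x y ∈ ({x, y} : Set ℝ) ∪ pars (BT.node l r) x y := by
      right; rw [pars]; left; left; rfl
    have hx : x ∈ ({x, y} : Set ℝ) ∪ pars (BT.node l r) x y := Or.inl (Or.inl rfl)
    have hy : y ∈ ({x, y} : Set ℝ) ∪ pars (BT.node l r) x y := Or.inl (Or.inr rfl)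
    have hliftl : ∀ s : ℝ, s ∈ ({x, mid x y} : Set ℝ) ∪ pars l x (mid x y) →
        s ∈ ({x, y} : Set ℝ) ∪ pars (BT.node l r) x y := by
      rintro s (( rfl | rfl) | hs)
      · exact hx
      · exact hmid
      · right; rw [pars]; left; right; exact hs
    have hliftr : ∀ s : ℝ, s ∈ ({mid x y, y} : Set ℝ) ∪ pars r (mid x y) y →
        s ∈ ({x, y} : Set ℝ) ∪ pars (BT.node l r) x y := by
      rintro s ((rfl | rfl) | hs)
      · exact hmid
      · exact hy
      · right; rw [pars]; right; exact hs
    rcases hτ with (hτ | hτ) | hτ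
    · rw [Set.mem_singleton_iff] at hτ; subst hτ
      exact ⟨hx, hmid, hy⟩
    · obtain ⟨c1, c2, c3⟩ := ihl _ _ τ hτ
      exact ⟨hliftl _ c1, hliftl _ c2, hliftl _ c3⟩
    · obtain ⟨c1, c2, c3⟩ := ihr _ _ τ hτ
      exact ⟨hliftr _ c1, hliftr _ c2, hliftr _ c3⟩

/-- Coordinates bounds, refined: all coords within `[x,y]`. -/
lemma tt_bounds {t : BT} {x y : ℝ} (hxy : x < y) {τ : ℝ × ℝ × ℝ} (hτ : τ ∈ tt t x y) :
    x ≤ τ.1 ∧ τ.1 < τ.2.1 ∧ τ.2.1 < τ.2.2 ∧ τ.2.2 ≤ y := by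
  obtain ⟨⟨o1, o2⟩, hb1, hb2⟩ := tt_ord t x y hxy τ hτ
  exact ⟨hb1, o1, o2, hb2⟩

/-- Pairwise separation. -/
lemma tt_sep : ∀ (t : BT) (x y : ℝ), x < y →
    ∀ τ ∈ tt t x y, ∀ τ' ∈ tt t x y, τ ≠ τ' → SepT τ τ' := by
  intro t
  induction t with
  | nil => intro x y _ τ hτ; simp [tt] at hτ
  | node l r ihl ihr =>
    intro x y hxy τ hτ τ' hτ' hne
    obtain ⟨h1, h2⟩ := mid_lt hxy
    rcases hτ with (hτ | hτ) | hτ <;> rcases hτ' with (hτ' | hτ') | hτ'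
    · rw [Set.mem_singleton_iff] at hτ hτ'; exact absurd (hτ.trans hτ'.symm) hne
    · -- root vs left
      rw [Set.mem_singleton_iff] at hτ; subst hτ
      obtain ⟨hb1, _, _, hb4⟩ := tt_bounds h1 hτ'
      right; right; left; exact ⟨hb1, hb4⟩
    · -- root vs right
      rw [Set.mem_singleton_iff] at hτ; subst hτ
      obtain ⟨hb1, _, _, hb4⟩ := tt_bounds h2 hτ'
      right; right; right; left; exact ⟨hb1, hb4⟩
    · -- left vs root
      rw [Set.mem_singleton_iff] at hτ'; subst hτ'
      obtain ⟨hb1, _, _, hb4⟩ := tt_bounds h1 hτ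
      right; right; right; right; left; exact ⟨hb1, hb4⟩
    · exact ihl _ _ h1 τ hτ τ' hτ' hne
    · -- left vs right
      obtain ⟨_, _, _, hb4⟩ := tt_bounds h1 hτ
      obtain ⟨hb1', _, _, _⟩ := tt_bounds h2 hτ'
      left; linarith
    · -- right vs root
      rw [Set.mem_singleton_iff] at hτ'; subst hτ'
      obtain ⟨hb1, _, _, hb4⟩ := tt_bounds h2 hτ
      right; right; right; right; right; exact ⟨hb1, hb4⟩
    · -- right vs left
      obtain ⟨hb1, _, _, _⟩ := tt_bounds h2 hτ
      obtain ⟨_, _, _, hb4'⟩ := tt_bounds h1 hτ'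
      right; left; linarith
    · exact ihr _ _ h2 τ hτ τ' hτ' hne

/-- Monotonicity in the subtree order. -/
lemma tt_mono : ∀ (t s : BT), s ∈ t.subs → ∀ x y : ℝ, tt s x y ⊆ tt t x y := by
  intro t
  induction t with
  | nil => intro s hs; simp [BT.subs] at hs
  | node l r ihl ihr =>
    intro s hs x y
    simp only [BT.subs, Finset.mem_image, Finset.mem_product] at hs
    obtain ⟨⟨sl, sr⟩, ⟨hsl, hsr⟩, rfl⟩ := hs
    rw [tt, tt]
    apply Set.union_subset
    apply Set.union_subset
    · exact Set.subset_union_of_subset_left (Set.subset_union_of_subset_left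
        (Set.Subset.refl _) _) _
    · rcases Finset.mem_insert.1 hsl with rfl | hsl
      · simp [tt]
      · exact Set.subset_union_of_subset_left
          (Set.subset_union_of_subset_right (ihl _ hsl x (mid x y)) _) _
    · rcases Finset.mem_insert.1 hsr with rfl | hsr
      · simp [tt]
      · exact Set.subset_union_of_subset_right (ihr _ hsr (mid x y) y) _

/-- The realization map is injective. -/
lemma tt_inj : ∀ (s s' : BT) (x y : ℝ), x < y → tt s x y = tt s' x y → s = s' := by
  intro s
  induction s with
  | nil =>
    intro s' x y hxy h
    cases s' with
    | nil => rfl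
    | node l' r' =>
      exfalso
      have : (x, mid x y, y) ∈ tt BT.nil x y := by
        rw [h, tt]; left; left; rfl
      simp [tt] at this
  | node l r ihl ihr =>
    intro s' x y hxy h
    cases s' with
    | nil =>
      exfalso
      have : (x, mid x y, y) ∈ tt BT.nil x y := by
        rw [← h, tt]; left; left; rfl
      simp [tt] at this
    | node l' r' =>
      obtain ⟨h1, h2⟩ := mid_lt hxy
      have keyl : ∀ (u u' : BT), tt (BT.node u u') x y ∩ {τ | τ.2.2 ≤ mid x y}
          = tt u x (mid x y) := by
        intro u u'
        ext τ
        simp only [tt, Set.mem_inter_iff, Set.mem_union, Set.mem_setOf_eq,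
          Set.mem_singleton_iff]
        constructor
        · rintro ⟨(rfl | hτ) | hτ, hle⟩
          · exfalso; simp only [] at hle; linarith
          · exact hτ
          · exfalso
            obtain ⟨hb1, hb2, hb3, _⟩ := tt_bounds h2 hτ
            linarith
        · intro hτ
          obtain ⟨_, _, _, hb4⟩ := tt_bounds h1 hτ
          exact ⟨Or.inl (Or.inr hτ), hb4⟩
      have keyr : ∀ (u u' : BT), tt (BT.node u u') x y ∩ {τ | mid x y ≤ τ.1}
          = tt u' (mid x y) y := by
        intro u u'
        ext τ
        simp only [tt, Set.mem_inter_iff, Set.mem_union, Set.mem_setOf_eq,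
          Set.mem_singleton_iff]
        constructor
        · rintro ⟨(rfl | hτ) | hτ, hle⟩
          · exfalso; simp only [] at hle; linarith
          · exfalso
            obtain ⟨hb1, hb2, hb3, hb4⟩ := tt_bounds h1 hτ
            linarith
          · exact hτ
        · intro hτ
          obtain ⟨hb1, _, _, _⟩ := tt_bounds h2 hτ
          exact ⟨Or.inr hτ, hb1⟩
      have el : tt l x (mid x y) = tt l' x (mid x y) := by
        rw [← keyl l r, ← keyl l' r', h]
      have er : tt r (mid x y) y = tt r' (mid x y) y := by
        rw [← keyr l r, ← keyr l' r', h]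
      rw [ihl _ _ _ h1 el, ihr _ _ _ h2 er]

/-! ### The union of the triangles of a realization is a convex hull -/

lemma tt_hull : ∀ (t : BT) (x y : ℝ), x < y →
    convexHull ℝ (pp '' ({x, y} ∪ pars t x y))
      = (⋃ τ ∈ tt t x y, (tri τ).carrier) ∪ segment ℝ (pp x) (pp y) := by
  intro t
  induction t with
  | nil =>
    intro x y _
    have : pp '' ({x, y} ∪ pars BT.nil x y) = {pp x, pp y} := by
      rw [pars]; rw [Set.union_empty]; rw [Set.image_insert_eq, Set.image_singleton]
    rw [this, convexHull_pair]
    simp [tt]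
  | node l r ihl ihr =>
    intro x y hxy
    obtain ⟨h1, h2⟩ := mid_lt hxy
    set m := mid x y with hm
    set T : Set Pt := convexHull ℝ ({pp x, pp m, pp y} : Set Pt) with hT
    have hsets : ({x, y} : Set ℝ) ∪ pars (BT.node l r) x y
        = ({x, m} ∪ pars l x m) ∪ ({m, y} ∪ pars r m y) := by
      rw [pars]
      ext s
      simp only [Set.mem_union, Set.mem_insert_iff, Set.mem_singleton_iff]
      tauto
    have hA : ({x, m} : Set ℝ) ∪ pars l x m ⊆ Set.Icc x m := by
      apply Set.union_subset
      · rintro s (rfl | rfl)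
        · exact ⟨le_refl _, le_of_lt h1⟩
        · exact ⟨le_of_lt h1, le_refl _⟩
      · intro s hs
        have := pars_subset l _ _ h1 hs
        exact ⟨le_of_lt this.1, le_of_lt this.2⟩
    have hB : ({m, y} : Set ℝ) ∪ pars r m y ⊆ Set.Icc m y := by
      apply Set.union_subset
      · rintro s (rfl | rfl)
        · exact ⟨le_refl _, le_of_lt h2⟩
        · exact ⟨le_of_lt h2, le_refl _⟩
      · intro s hs
        have := pars_subset r _ _ h2 hs
        exact ⟨le_of_lt this.1, le_of_lt this.2⟩
    have hmerge := merge h1 h2 hA hB (Or.inl (Or.inl rfl)) (Or.inl (Or.inr rfl))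
      (Or.inl (Or.inl rfl)) (Or.inl (Or.inr rfl))
    rw [hsets, hmerge, ihl _ _ h1, ihr _ _ h2]
    have hbig : (⋃ τ ∈ tt (BT.node l r) x y, (tri τ).carrier)
        = T ∪ (⋃ τ ∈ tt l x m, (tri τ).carrier) ∪ (⋃ τ ∈ tt r m y, (tri τ).carrier) := by
      rw [tt, Set.biUnion_union, Set.biUnion_union, Set.biUnion_singleton]
      rfl
    rw [hbig]
    have i1 : segment ℝ (pp x) (pp m) ⊆ T :=
      seg_sub_hull3 (Or.inl rfl) (Or.inr (Or.inl rfl))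
    have i2 : segment ℝ (pp m) (pp y) ⊆ T :=
      seg_sub_hull3 (Or.inr (Or.inl rfl)) (Or.inr (Or.inr rfl))
    have i3 : segment ℝ (pp x) (pp y) ⊆ T :=
      seg_sub_hull3 (Or.inl rfl) (Or.inr (Or.inr rfl))
    ext z
    have j1 := @i1 z
    have j2 := @i2 z
    have j3 := @i3 z
    simp only [Set.mem_union]
    tauto

lemma tt_union_eq_hull {t : BT} (h : t ≠ BT.nil) {x y : ℝ} (hxy : x < y) :
    (⋃ τ ∈ tt t x y, (tri τ).carrier)
      = convexHull ℝ (pp '' ({x, y} ∪ pars t x y)) := by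
  cases t with
  | nil => exact absurd rfl h
  | node l r =>
    rw [tt_hull _ _ _ hxy]
    apply (Set.union_eq_self_of_subset_right ?_).symm
    have hroot : (x, mid x y, y) ∈ tt (BT.node l r) x y := Or.inl (Or.inl rfl)
    have hseg : segment ℝ (pp x) (pp y) ⊆ (tri (x, mid x y, y)).carrier :=
      seg_sub_hull3 (Or.inl rfl) (Or.inr (Or.inr rfl))
    exact hseg.trans (Set.subset_biUnion_of_mem (u := fun τ => (tri τ).carrier) hroot)

/-! ### The mesh of a realization -/

lemma tri_verts (τ : ℝ × ℝ × ℝ) :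
    (tri τ).verts = {pp τ.1, pp τ.2.1, pp τ.2.2} := rfl

lemma tri_inj {τ τ' : ℝ × ℝ × ℝ} (h : tri τ = tri τ') : τ = τ' := by
  obtain ⟨a, b, c⟩ := τ; obtain ⟨a', b', c'⟩ := τ'
  simp only [tri, mkT, Tri.mk.injEq] at h
  obtain ⟨h1, h2, h3⟩ := h
  exact Prod.ext (pp_inj h1) (Prod.ext (pp_inj h2) (pp_inj h3))

def meshOf (t : BT) (h : t ≠ BT.nil) : Mesh where
  tris := tri '' tt t 0 1
  finite := (tt_finite t 0 1).image _
  nonempty := by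
    cases t with
    | nil => exact absurd rfl h
    | node l r => exact ⟨tri (0, mid 0 1, 1), ⟨(0, mid 0 1, 1), Or.inl (Or.inl rfl), rfl⟩⟩
  nondeg := by
    rintro T ⟨τ, hτ, rfl⟩
    obtain ⟨⟨o1, o2⟩, _, _⟩ := tt_ord t 0 1 one_pos τ hτ
    rw [Tri.Nondeg, tri_verts]
    exact pp_noncollinear o1 o2
  proper := by
    rintro T ⟨τ, hτ, rfl⟩ T' ⟨τ', hτ', rfl⟩ hne
    have hτne : τ ≠ τ' := fun he => hne (by rw [he])
    obtain ⟨hO, _, _⟩ := tt_ord t 0 1 one_pos τ hτ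
    obtain ⟨hO', _, _⟩ := tt_ord t 0 1 one_pos τ' hτ'
    exact sep_conc hO hO' (tt_sep t 0 1 one_pos τ hτ τ' hτ' hτne)

lemma pars_cover : ∀ (t : BT), t ≠ BT.nil → ∀ (x y : ℝ),
    ∀ s ∈ ({x, y} : Set ℝ) ∪ pars t x y,
    ∃ τ ∈ tt t x y, s = τ.1 ∨ s = τ.2.1 ∨ s = τ.2.2 := by
  intro t
  induction t with
  | nil => intro h; exact absurd rfl h
  | node l r ihl ihr =>
    intro _ x y s hs
    have hroot : (x, mid x y, y) ∈ tt (BT.node l r) x y := Or.inl (Or.inl rfl)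
    rcases hs with (rfl | rfl) | hs
    · exact ⟨_, hroot, Or.inl rfl⟩
    · exact ⟨_, hroot, Or.inr (Or.inr rfl)⟩
    rcases hs with (hs | hs) | hs
    · rw [Set.mem_singleton_iff] at hs; subst hs
      exact ⟨_, hroot, Or.inr (Or.inl rfl)⟩
    · have hlne : l ≠ BT.nil := by
        intro he; rw [he] at hs; simp [pars] at hs
      obtain ⟨τ, hτ, hcoord⟩ := ihl hlne x (mid x y) s (Or.inr hs)
      exact ⟨τ, Or.inl (Or.inr hτ), hcoord⟩
    · have hrne : r ≠ BT.nil := by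
        intro he; rw [he] at hs; simp [pars] at hs
      obtain ⟨τ, hτ, hcoord⟩ := ihr hrne (mid x y) y s (Or.inr hs)
      exact ⟨τ, Or.inr hτ, hcoord⟩

lemma meshOf_verts (t : BT) (h : t ≠ BT.nil) :
    (meshOf t h).verts = pp '' ({0, 1} ∪ pars t 0 1) := by
  apply Set.Subset.antisymm
  · intro v hv
    rw [Mesh.verts] at hv
    simp only [Set.mem_iUnion] at hv
    obtain ⟨T, ⟨τ, hτ, rfl⟩, hvm⟩ := hv
    obtain ⟨c1, c2, c3⟩ := tt_coords t 0 1 τ hτ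
    rcases hvm with rfl | rfl | rfl
    exacts [⟨τ.1, c1, rfl⟩, ⟨τ.2.1, c2, rfl⟩, ⟨τ.2.2, c3, rfl⟩]
  · rintro v ⟨s, hs, rfl⟩
    obtain ⟨τ, hτ, hcoord⟩ := pars_cover t h 0 1 s hs
    rw [Mesh.verts]
    simp only [Set.mem_iUnion]
    refine ⟨tri τ, ⟨τ, hτ, rfl⟩, ?_⟩
    rcases hcoord with rfl | rfl | rfl
    exacts [Or.inl rfl, Or.inr (Or.inl rfl), Or.inr (Or.inr rfl)]

lemma meshOf_verts_ncard (t : BT) (h : t ≠ BT.nil) :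
    (meshOf t h).verts.ncard = t.sz + 2 := by
  rw [meshOf_verts t h, Set.ncard_image_of_injective _ pp_inj]
  have hdisj : Disjoint ({0, 1} : Set ℝ) (pars t 0 1) := by
    apply Set.disjoint_left.2
    rintro s (rfl | rfl) hs
    · exact absurd (pars_subset t 0 1 one_pos hs).1 (lt_irrefl _)
    · exact absurd (pars_subset t 0 1 one_pos hs).2 (lt_irrefl _)
  rw [Set.ncard_union_eq hdisj (Set.toFinite _) (pars_finite t 0 1),
    pars_ncard t 0 1 one_pos]
  have : ({0, 1} : Set ℝ).ncard = 2 := by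
    rw [Set.ncard_pair (by norm_num : (0:ℝ) ≠ 1)]
  rw [this]
  ring

/-! ### Potatoes from subtrees -/

def Pot (s : BT) : Set Pt := ⋃ τ ∈ tt s 0 1, (tri τ).carrier

lemma pot_isPotato {t : BT} (h : t ≠ BT.nil) {s : BT} (hs : s ∈ t.subs) :
    (meshOf t h).IsPotato (Pot s) := by
  have hsne : s ≠ BT.nil := BT.subs_ne_nil t s hs
  refine ⟨tri '' tt s 0 1, ?_, ?_, ?_, ?_⟩
  · exact Set.image_mono (tt_mono t s hs 0 1)
  · cases s with
    | nil => exact absurd rfl hsne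
    | node l r => exact ⟨tri (0, mid 0 1, 1), ⟨(0, mid 0 1, 1), Or.inl (Or.inl rfl), rfl⟩⟩
  · rw [Pot, Set.biUnion_image]
  · rw [Pot, tt_union_eq_hull hsne one_pos]
    exact convex_convexHull ℝ _
  
lemma pot_not_sub {t s s' : BT} (hs : s ∈ t.subs) (hs' : s' ∈ t.subs)
    {τ : ℝ × ℝ × ℝ} (hτ : τ ∈ tt s 0 1) (hτ' : τ ∉ tt s' 0 1) : ¬ Pot s ⊆ Pot s' := by
  intro hsub
  have hmem : ctd τ ∈ Pot s :=
    Set.subset_biUnion_of_mem (u := fun τ => (tri τ).carrier) hτ (ctd_mem τ)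
  have hmem' := hsub hmem
  rw [Pot, Set.mem_iUnion₂] at hmem'
  obtain ⟨τ'', hτ'', hctd⟩ := hmem'
  have hne : τ ≠ τ'' := fun he => hτ' (he ▸ hτ'')
  have hτt : τ ∈ tt t 0 1 := tt_mono t s hs 0 1 hτ
  have hτ''t : τ'' ∈ tt t 0 1 := tt_mono t s' hs' 0 1 hτ''
  obtain ⟨hO, _, _⟩ := tt_ord t 0 1 one_pos τ hτt
  obtain ⟨hO'', _, _⟩ := tt_ord t 0 1 one_pos τ'' hτ''t
  exact ctd_not_mem hO hO'' (tt_sep t 0 1 one_pos τ hτt τ'' hτ''t hne) hctd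

lemma pot_injOn (t : BT) : Set.InjOn Pot ↑t.subs := by
  intro s hs s' hs' heq
  by_contra hne
  have htne : tt s 0 1 ≠ tt s' 0 1 := fun he => hne (tt_inj s s' 0 1 one_pos he)
  have : ¬ (tt s 0 1 ⊆ tt s' 0 1) ∨ ¬ (tt s' 0 1 ⊆ tt s 0 1) := by
    by_contra hc
    push_neg at hc
    exact htne (Set.Subset.antisymm hc.1 hc.2)
  rcases this with hns | hns
  · obtain ⟨τ, hτ, hτ'⟩ := Set.not_subset.mp hns
    exact pot_not_sub hs hs' hτ hτ' (heq ▸ Set.Subset.refl _)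
  · obtain ⟨τ, hτ, hτ'⟩ := Set.not_subset.mp hns
    exact pot_not_sub hs' hs hτ hτ' (heq ▸ Set.Subset.refl _)

lemma potato_count (t : BT) (h : t ≠ BT.nil) :
    (t.cnt : ℝ) ≤ ({P : Set Pt | (meshOf t h).IsPotato P}.ncard : ℝ) := by
  have hPfin : {P : Set Pt | (meshOf t h).IsPotato P}.Finite := by
    apply Set.Finite.subset (((meshOf t h).finite.finite_subsets).image
      (fun (S : Set Tri) => ⋃ T ∈ S, T.carrier))
    rintro P ⟨S, hS, _, hP, _⟩
    exact ⟨S, hS, hP.symm⟩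
  have hsub : Pot '' ↑t.subs ⊆ {P : Set Pt | (meshOf t h).IsPotato P} := by
    rintro P ⟨s, hs, rfl⟩
    exact pot_isPotato h hs
  have hc1 : (Pot '' ↑t.subs).ncard = t.cnt := by
    rw [Set.ncard_image_of_injOn (pot_injOn t), Set.ncard_coe_finset, BT.card_subs]
  have := Set.ncard_le_ncard hsub hPfin
  rw [hc1] at this
  exact_mod_cast this

/-! ### A good family of trees -/

def BT.leaf : BT := .node .nil .nil
def g1T : BT := .node BT.leaf BT.leaf
def g2T : BT := .node g1T g1T
def g3T : BT := .node g2T g2T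

lemma g3T_sz : g3T.sz = 15 := rfl
lemma g3T_cnt : g3T.cnt = 676 := rfl

def chain : ℕ → BT
  | 0 => .nil
  | k + 1 => .node (chain k) .nil

lemma chain_sz (k : ℕ) : (chain k).sz = k := by
  induction k with
  | zero => rfl
  | succ k ih => rw [chain, BT.sz, ih, BT.sz]

lemma chain_cnt (k : ℕ) : (chain k).cnt = k := by
  induction k with
  | zero => rfl
  | succ k ih => rw [chain, BT.cnt, ih, BT.cnt]; ring

def bt (m : ℕ) : BT :=
  if h : m < 16 then chain m else .node g3T (bt (m - 16))
  decreasing_by omega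

lemma bt_sz (m : ℕ) : (bt m).sz = m := by
  induction m using Nat.strong_induction_on with
  | _ m ih =>
    rw [bt]
    split
    · exact chain_sz m
    · rename_i h
      rw [BT.sz, g3T_sz, ih (m - 16) (by omega)]
      omega

lemma bt_ne_nil {m : ℕ} (hm : 1 ≤ m) : bt m ≠ BT.nil := by
  rw [bt]
  split
  · cases m with
    | zero => omega
    | succ k => rw [chain]; exact fun h => BT.noConfusion h
  · exact fun h => BT.noConfusion h

lemma bt_cnt_pos {m : ℕ} (hm : 1 ≤ m) : 1 ≤ (bt m).cnt := by
  induction m using Nat.strong_induction_on with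
  | _ m ih =>
    rw [bt]
    split
    · rw [chain_cnt]; exact hm
    · rename_i h
      rw [BT.cnt, g3T_cnt]
      nlinarith [Nat.zero_le (bt (m - 16)).cnt]

lemma beta16 : (1.5028 : ℝ) ^ 16 ≤ 677 := by norm_num

lemma beta_ge_one : (1 : ℝ) ≤ 1.5028 := by norm_num

lemma bt_cnt_key : ∀ m : ℕ, (1.5028 : ℝ) ^ m ≤ (1.5028 : ℝ) ^ 16 * (1 + ((bt m).cnt : ℝ)) := by
  intro m
  induction m using Nat.strong_induction_on with
  | _ m ih =>
    rcases lt_or_ge m 16 with h | h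
    · have h1 : (1.5028 : ℝ) ^ m ≤ (1.5028 : ℝ) ^ 16 :=
        pow_le_pow_right₀ beta_ge_one (by omega)
      have h2 : (1 : ℝ) ≤ 1 + ((bt m).cnt : ℝ) := le_add_of_nonneg_right (by positivity)
      nlinarith [pow_pos (lt_of_lt_of_le one_pos beta_ge_one) 16]
    · have key := ih (m - 16) (by omega)
      have hcnt : ((bt m).cnt : ℝ) = 677 * (1 + ((bt (m - 16)).cnt : ℝ)) := by
        rw [bt]
        split
        · omega
        · rw [BT.cnt, g3T_cnt]; push_cast; ring
      have hsplit : (1.5028 : ℝ) ^ m = (1.5028 : ℝ) ^ 16 * (1.5028 : ℝ) ^ (m - 16) := by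
        rw [← pow_add]
        congr 1
        omega
      have hp16 : (0:ℝ) < (1.5028 : ℝ) ^ 16 := by positivity
      have step1 : (1.5028 : ℝ) ^ m ≤ (1.5028 : ℝ) ^ 16 *
          ((1.5028 : ℝ) ^ 16 * (1 + ((bt (m-16)).cnt : ℝ))) := by
        rw [hsplit]
        exact mul_le_mul_of_nonneg_left key (le_of_lt hp16)
      have hpos : (0:ℝ) ≤ 1 + ((bt (m-16)).cnt : ℝ) := by positivity
      have step2 : (1.5028 : ℝ) ^ 16 * (1 + ((bt (m-16)).cnt : ℝ))
          ≤ 677 * (1 + ((bt (m-16)).cnt : ℝ)) :=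
        mul_le_mul_of_nonneg_right beta16 hpos
      calc (1.5028 : ℝ) ^ m
          ≤ (1.5028 : ℝ) ^ 16 * ((1.5028 : ℝ) ^ 16 * (1 + ((bt (m-16)).cnt : ℝ))) := step1
        _ ≤ (1.5028 : ℝ) ^ 16 * (677 * (1 + ((bt (m-16)).cnt : ℝ))) :=
            mul_le_mul_of_nonneg_left step2 (le_of_lt hp16)
        _ = (1.5028 : ℝ) ^ 16 * ((bt m).cnt : ℝ) := by rw [hcnt]
        _ ≤ (1.5028 : ℝ) ^ 16 * (1 + ((bt m).cnt : ℝ)) := by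
            nlinarith [hp16]

lemma bt_cnt_lower {m : ℕ} (hm : 1 ≤ m) :
    (1.5028 : ℝ) ^ m / (2 * (1.5028 : ℝ) ^ 16) ≤ ((bt m).cnt : ℝ) := by
  have hp16 : (0:ℝ) < (1.5028 : ℝ) ^ 16 := by positivity
  have key := bt_cnt_key m
  have hpos : (1 : ℝ) ≤ ((bt m).cnt : ℝ) := by exact_mod_cast bt_cnt_pos hm
  rw [div_le_iff₀ (by positivity)]
  nlinarith [key, hpos, hp16]


/-- There exist `c > 0` and `n₀` such that for every `n ≥ n₀` there is a mesh with
`n` vertices having at least `c · 1.5028 ^ n` convex polygons respecting it. -/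
theorem many_potatoes_in_general_meshes :
    ∃ c : ℝ, 0 < c ∧ ∃ n₀ : ℕ, ∀ n : ℕ, n₀ ≤ n →
      ∃ M : Mesh, M.verts.ncard = n ∧
        c * 1.5028 ^ n ≤ ({P : Set Pt | M.IsPotato P}.ncard : ℝ) := by
  refine ⟨1 / (2 * (1.5028 : ℝ) ^ 18), by positivity, 3, ?_⟩
  intro n hn
  have hm : 1 ≤ n - 2 := by omega
  have hne := bt_ne_nil hm
  refine ⟨meshOf (bt (n - 2)) hne, ?_, ?_⟩
  · rw [meshOf_verts_ncard, bt_sz]; omega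
  · have hcount := potato_count (bt (n - 2)) hne
    have hlower := bt_cnt_lower hm
    have hpow : (1.5028 : ℝ) ^ n = 1.5028 ^ (n - 2) * 1.5028 ^ 2 := by
      rw [← pow_add]; congr 1; omega
    have hstep : 1 / (2 * (1.5028 : ℝ) ^ 18) * 1.5028 ^ n
        = 1.5028 ^ (n - 2) / (2 * 1.5028 ^ 16) := by
      rw [hpow, show (18 : ℕ) = 16 + 2 from rfl, pow_add]
      have h16 : ((1.5028 : ℝ)) ^ 16 ≠ 0 := by positivity
      have h2 : ((1.5028 : ℝ)) ^ 2 ≠ 0 := by positivity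
      field_simp
    rw [hstep]
    exact le_trans hlower hcount
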